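/- Let β, p, W, T be integers with β > 0, 0 < W < p, and 0 ≤ T < β. Set W' = ⌊W·β/p⌋ and Q = ⌊W'·T/β⌋. Then Q ≤ ⌊W·T/p⌋ ≤ Q + 1; that is, the estimated quotient Q computed from the precomputed approximation W' differs from the true Euclidean quotient ⌊W·T/p⌋ by at most one, and never exceeds it. -/
import Mathlib


/-- The estimated quotient `Q = ⌊W'·T/β⌋` computed from the precomputed
approximation `W' = ⌊W·β/p⌋` never exceeds the true Euclidean quotient
`⌊W·T/p⌋`, and differs from it by at most one. -/
theorem shoup_quotient_estimate
    (β p W T W' Q : ℤ)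
    (hβ : β > 0) (hW0 : 0 < W) (hWp : W < p) (hT0 : 0 ≤ T) (hTβ : T < β)
    (hW' : W' = W * β / p) (hQ : Q = W' * T / β) :
    Q ≤ W * T / p ∧ W * T / p ≤ Q + 1 := by
  have hp : 0 < p := hW0.trans hWp
  have h1 : W' * p ≤ W * β := by
    rw [hW']; exact Int.ediv_mul_le _ (ne_of_gt hp)
  have h2 : W * β < (W' + 1) * p := by
    rw [hW']; exact Int.lt_ediv_add_one_mul_self _ hp
  have h3 : Q * β ≤ W' * T := by
    rw [hQ]; exact Int.ediv_mul_le _ (ne_of_gt hβ)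
  have h4 : W' * T < (Q + 1) * β := by
    rw [hQ]; exact Int.lt_ediv_add_one_mul_self _ hβ
  constructor
  · rw [Int.le_ediv_iff_mul_le hp]
    nlinarith
  · have : W * T / p < Q + 2 := by
      rw [Int.ediv_lt_iff_lt_mul hp]
      nlinarith
    omega
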